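/- For any table r and any lists of attributes X = [X₁, …, X_n] and Y = [Y₁, …, Y_m]: r satisfies the order compatibility X ~ Y if and only if for all indices 1 ≤ i ≤ n and 1 ≤ j ≤ m, attributes X_i and Y_j are order compatible in the context {X₁, …, X_{i−1}} ∪ {Y₁, …, Y_{j−1}} over r. -/

import Mathlib

/-- `ordLE X t s` : the lexicographic weak order `t ≼_X s` induced by a list
of attributes `X` (each attribute is a function `τ → ℤ`). -/
def ordLE {τ : Type*} : List (τ → ℤ) → τ → τ → Prop
  | [], _, _ => True
  | A :: T, t, s => A t < A s ∨ (A t = A s ∧ ordLE T t s)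

/-- The table `r` satisfies the order dependency (OD) `X ↦→ Y`. -/
def satOD {τ : Type*} (r : List τ) (X Y : List (τ → ℤ)) : Prop :=
  ∀ t ∈ r, ∀ s ∈ r, ordLE X t s → ordLE Y t s

/-- `X` and `Y` are order equivalent over `r` (`X ↔ Y`). -/
def orderEquiv {τ : Type*} (r : List τ) (X Y : List (τ → ℤ)) : Prop :=
  satOD r X Y ∧ satOD r Y X

/-- `X` and `Y` are order compatible over `r` (the OCD `X ~ Y`). -/
def satOCD {τ : Type*} (r : List τ) (X Y : List (τ → ℤ)) : Prop :=
  orderEquiv r (X ++ Y) (Y ++ X)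

/-- The table `r` satisfies the functional dependency (FD) `X → Y`. -/
def satFD {τ : Type*} (r : List τ) (X Y : Finset (τ → ℤ)) : Prop :=
  ∀ t ∈ r, ∀ s ∈ r, (∀ A ∈ X, A t = A s) → ∀ B ∈ Y, B t = B s

/-- Attribute `A` is a constant in the context `Z` over `r`
(the set-based canonical OD `Z : [] ↦→ A`). -/
def constIn {τ : Type*} [DecidableEq (τ → ℤ)] (r : List τ) (Z : Finset (τ → ℤ))
    (A : τ → ℤ) : Prop :=
  ∀ Zp : List (τ → ℤ), Zp.Nodup → Zp.toFinset = Z → satOD r Zp (Zp ++ [A])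

/-- Attributes `A` and `B` are order compatible in the context `Z` over `r`
(the set-based canonical OCD `Z : A ~ B`). -/
def ocIn {τ : Type*} [DecidableEq (τ → ℤ)] (r : List τ) (Z : Finset (τ → ℤ))
    (A B : τ → ℤ) : Prop :=
  ∀ Zp : List (τ → ℤ), Zp.Nodup → Zp.toFinset = Z → satOCD r (Zp ++ [A]) (Zp ++ [B])

/-- Strict lexicographic order. -/
def ordLT {τ : Type*} : List (τ → ℤ) → τ → τ → Prop
  | [], _, _ => False
  | A :: T, t, s => A t < A s ∨ (A t = A s ∧ ordLT T t s)

/-- All attributes in `L` agree on `t` and `s`. -/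
def eqOn {τ : Type*} (L : List (τ → ℤ)) (t s : τ) : Prop := ∀ A ∈ L, A t = A s

lemma eqOn_nil {τ : Type*} (t s : τ) : eqOn [] t s := by intro A h; cases h

lemma eqOn_cons {τ : Type*} {A : τ → ℤ} {L : List (τ → ℤ)} {t s : τ} :
    eqOn (A :: L) t s ↔ A t = A s ∧ eqOn L t s := by
  simp [eqOn]

lemma eqOn_symm {τ : Type*} {L : List (τ → ℤ)} {t s : τ} (h : eqOn L t s) : eqOn L s t :=
  fun A hA => (h A hA).symm

lemma ordLE_iff {τ : Type*} (L : List (τ → ℤ)) (t s : τ) :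
    ordLE L t s ↔ ordLT L t s ∨ eqOn L t s := by
  induction L with
  | nil => simp [ordLE, ordLT, eqOn_nil]
  | cons A T ih =>
    simp only [ordLE, ordLT, eqOn_cons, ih]
    tauto

lemma ordLE_total {τ : Type*} (L : List (τ → ℤ)) (t s : τ) :
    ordLE L t s ∨ ordLE L s t := by
  induction L with
  | nil => exact Or.inl trivial
  | cons A T ih =>
    rcases lt_trichotomy (A t) (A s) with h | h | h
    · exact Or.inl (Or.inl h)
    · rcases ih with h3 | h3
      · exact Or.inl (Or.inr ⟨h, h3⟩)
      · exact Or.inr (Or.inr ⟨h.symm, h3⟩)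
    · exact Or.inr (Or.inl h)

lemma ordLT_asymm {τ : Type*} {L : List (τ → ℤ)} {t s : τ}
    (h1 : ordLT L t s) (h2 : ordLT L s t) : False := by
  induction L with
  | nil => exact h1
  | cons A T ih =>
    rcases h1 with h1 | ⟨e1, h1⟩ <;> rcases h2 with h2 | ⟨e2, h2⟩
    · omega
    · omega
    · omega
    · exact ih h1 h2

lemma ordLT_of_eqOn {τ : Type*} {L : List (τ → ℤ)} {t s : τ}
    (h1 : ordLT L t s) (h2 : eqOn L t s) : False := by
  induction L with
  | nil => exact h1
  | cons A T ih =>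
    rw [eqOn_cons] at h2
    rcases h1 with h1 | ⟨e1, h1⟩
    · omega
    · exact ih h1 h2.2

lemma eqOn_append {τ : Type*} {X Y : List (τ → ℤ)} {t s : τ} :
    eqOn (X ++ Y) t s ↔ eqOn X t s ∧ eqOn Y t s := by
  simp [eqOn, or_imp, forall_and]

lemma ordLT_append {τ : Type*} {X Y : List (τ → ℤ)} {t s : τ} :
    ordLT (X ++ Y) t s ↔ ordLT X t s ∨ (eqOn X t s ∧ ordLT Y t s) := by
  induction X with
  | nil => simp [ordLT, eqOn_nil]
  | cons A T ih =>
    simp only [List.cons_append, ordLT, eqOn_cons, ih]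
    tauto

lemma ordLE_append {τ : Type*} {X Y : List (τ → ℤ)} {t s : τ} :
    ordLE (X ++ Y) t s ↔ ordLT X t s ∨ (eqOn X t s ∧ ordLE Y t s) := by
  rw [ordLE_iff, ordLT_append, eqOn_append, ordLE_iff]
  tauto

lemma ordLT_single {τ : Type*} {A : τ → ℤ} {t s : τ} : ordLT [A] t s ↔ A t < A s := by
  simp [ordLT]

lemma satOD_of_noswap {τ : Type*} {r : List τ} {U V : List (τ → ℤ)}
    (h : ∀ t ∈ r, ∀ s ∈ r, ¬ (ordLT U t s ∧ ordLT V s t)) :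
    satOD r (U ++ V) (V ++ U) := by
  intro t ht s hs hle
  rw [ordLE_append] at hle ⊢
  rcases hle with hU | ⟨hUe, hV⟩
  · have hVle : ordLE V t s := by
      rcases ordLE_total V t s with h3 | h3
      · exact h3
      · rcases (ordLE_iff V s t).mp h3 with h4 | h4
        · exact absurd ⟨hU, h4⟩ (h t ht s hs)
        · exact (ordLE_iff V t s).mpr (Or.inr (eqOn_symm h4))
    rcases (ordLE_iff V t s).mp hVle with h4 | h4
    · exact Or.inl h4
    · exact Or.inr ⟨h4, (ordLE_iff U t s).mpr (Or.inl hU)⟩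
  · rcases (ordLE_iff V t s).mp hV with h4 | h4
    · exact Or.inl h4
    · exact Or.inr ⟨h4, (ordLE_iff U t s).mpr (Or.inr hUe)⟩

/-- Characterization of OCD: no "swap". -/
lemma satOCD_iff_noswap {τ : Type*} (r : List τ) (X Y : List (τ → ℤ)) :
    satOCD r X Y ↔ ∀ t ∈ r, ∀ s ∈ r, ¬ (ordLT X t s ∧ ordLT Y s t) := by
  constructor
  · rintro ⟨h1, _⟩ t ht s hs ⟨hX, hY⟩
    have hle : ordLE (X ++ Y) t s := by
      rw [ordLE_append]; exact Or.inl hX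
    have := h1 t ht s hs hle
    rw [ordLE_append] at this
    rcases this with hY' | ⟨hYe, _⟩
    · exact ordLT_asymm hY hY'
    · exact ordLT_of_eqOn hY (eqOn_symm hYe)
  · intro h
    exact ⟨satOD_of_noswap h,
      satOD_of_noswap (fun t ht s hs ⟨h1, h2⟩ => h s hs t ht ⟨h2, h1⟩)⟩

/-- Characterization of context OC. -/
lemma ocIn_iff {τ : Type*} [DecidableEq (τ → ℤ)] (r : List τ) (Z : Finset (τ → ℤ))
    (A B : τ → ℤ) :
    ocIn r Z A B ↔ ∀ t ∈ r, ∀ s ∈ r,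
      ¬ ((∀ C ∈ Z, C t = C s) ∧ A t < A s ∧ B s < B t) := by
  constructor
  · intro h t ht s hs ⟨hZ, hA, hB⟩
    have hocd := h Z.toList Z.nodup_toList (Finset.toList_toFinset Z)
    rw [satOCD_iff_noswap] at hocd
    refine hocd t ht s hs ⟨?_, ?_⟩
    · rw [ordLT_append]
      exact Or.inr ⟨fun C hC => hZ C (Finset.mem_toList.mp hC), ordLT_single.mpr hA⟩
    · rw [ordLT_append]
      exact Or.inr ⟨fun C hC => (hZ C (Finset.mem_toList.mp hC)).symm,
        ordLT_single.mpr hB⟩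
  · intro h Zp hnd hZp
    rw [satOCD_iff_noswap]
    rintro t ht s hs ⟨h1, h2⟩
    rw [ordLT_append] at h1 h2
    rcases h1 with h1 | ⟨e1, h1⟩ <;> rcases h2 with h2 | ⟨e2, h2⟩
    · exact ordLT_asymm h1 h2
    · exact ordLT_of_eqOn h1 (eqOn_symm e2)
    · exact ordLT_of_eqOn h2 (eqOn_symm e1)
    · refine h t ht s hs ⟨?_, ordLT_single.mp h1, ordLT_single.mp h2⟩
      intro C hC
      exact e1 C (by rw [← hZp] at hC; exact List.mem_toFinset.mp hC)

lemma ordLT_iff_exists {τ : Type*} (X : List (τ → ℤ)) (t s : τ) :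
    ordLT X t s ↔ ∃ i : Fin X.length,
      eqOn (X.take i) t s ∧ X.get i t < X.get i s := by
  induction X with
  | nil => simp [ordLT]
  | cons A T ih =>
    constructor
    · rintro (h | ⟨e, h⟩)
      · exact ⟨⟨0, by simp⟩, by simp [eqOn_nil], h⟩
      · obtain ⟨i, hi1, hi2⟩ := ih.mp h
        refine ⟨i.succ, ?_, by simpa using hi2⟩
        simpa [List.take_succ_cons, eqOn_cons] using ⟨e, hi1⟩
    · rintro ⟨i, hi1, hi2⟩
      rcases i with ⟨n, hn⟩
      cases n with
      | zero => exact Or.inl hi2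
      | succ m =>
        right
        rw [List.take_succ_cons, eqOn_cons] at hi1
        exact ⟨hi1.1, ih.mpr ⟨⟨m, by simpa using hn⟩, hi1.2, by simpa using hi2⟩⟩

theorem stmt_4 {τ : Type*} [DecidableEq (τ → ℤ)] (r : List τ) (X Y : List (τ → ℤ)) :
    satOCD r X Y ↔
      ∀ (i : Fin X.length) (j : Fin Y.length),
        ocIn r ((X.take i).toFinset ∪ (Y.take j).toFinset) (X.get i) (Y.get j) := by
  rw [satOCD_iff_noswap]
  constructor
  · intro h i j
    rw [ocIn_iff]
    rintro t ht s hs ⟨hZ, hA, hB⟩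
    have hZ' : ∀ C, C ∈ X.take i ∨ C ∈ Y.take j → C t = C s := by
      intro C hC
      exact hZ C (by rcases hC with hC | hC <;>
        simp [Finset.mem_union, List.mem_toFinset, hC])
    refine h t ht s hs ⟨?_, ?_⟩
    · exact (ordLT_iff_exists X t s).mpr ⟨i, fun C hC => hZ' C (Or.inl hC), hA⟩
    · exact (ordLT_iff_exists Y s t).mpr ⟨j,
        fun C hC => (hZ' C (Or.inr hC)).symm, hB⟩
  · rintro h t ht s hs ⟨h1, h2⟩
    obtain ⟨i, hi1, hi2⟩ := (ordLT_iff_exists X t s).mp h1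
    obtain ⟨j, hj1, hj2⟩ := (ordLT_iff_exists Y s t).mp h2
    have := (ocIn_iff r _ _ _).mp (h i j) t ht s hs
    refine this ⟨?_, hi2, hj2⟩
    intro C hC
    rcases Finset.mem_union.mp hC with hC | hC
    · exact hi1 C (List.mem_toFinset.mp hC)
    · exact (hj1 C (List.mem_toFinset.mp hC)).symm
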